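/- Let p : E → B be a disk-hedgehog covering of path-connected spaces with X a Peano space, f : X → B continuous, x₀ ∈ X, e₀ ∈ E with f(x₀) = p(e₀) = b₀. Then f admits a continuous lift g : X → E with g(x₀) = e₀ and p ∘ g = f if and only if the image of the induced map π(X,x₀) → π(B,b₀) on hedgehog fundamental groups is contained in the image of π(E,e₀) → π(B,b₀). -/

import Mathlib

open unitInterval Topology

set_option linter.unnecessarySimpa false

universe u v w

/-- `p : E → B` is an arc-covering: unique lifting of paths given the initial point. -/
def IsArcCovering {E : Type*} {B : Type*} [TopologicalSpace E] [TopologicalSpace B]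
    (p : C(E, B)) : Prop :=
  ∀ (e₀ : E) (f : C(I, B)), f 0 = p e₀ →
    ∃! g : C(I, E), p.comp g = f ∧ g 0 = e₀

/-- The relation identifying the wedge points of a wedge of copies of `(A, a₀)` indexed by `S`. -/
def wedgeRel (S A : Type*) (a₀ : A) (x y : S × A) : Prop :=
  x = y ∨ (x.2 = a₀ ∧ y.2 = a₀)

/-- The wedge (one-point union) of copies of `(A, a₀)` indexed by `S`. -/
def Wedge (S A : Type*) (a₀ : A) : Type _ :=
  Quot (wedgeRel S A a₀)

/-- The topology of a directed wedge: a set is open iff its trace on each copy of `A`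
is open, and if it contains the wedge point then it contains all copies of `A`
beyond some index. -/
instance Wedge.instTopologicalSpace (S A : Type*) (a₀ : A) [Preorder S]
    [IsDirected S (· ≤ ·)] [TopologicalSpace A] : TopologicalSpace (Wedge S A a₀) where
  IsOpen U := (∀ s : S, IsOpen {a : A | Quot.mk (wedgeRel S A a₀) (s, a) ∈ U}) ∧
    ((∃ s : S, Quot.mk (wedgeRel S A a₀) (s, a₀) ∈ U) →
      ∃ t : S, ∀ s : S, t < s → ∀ a : A, Quot.mk (wedgeRel S A a₀) (s, a) ∈ U)
  isOpen_univ := by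
    refine ⟨fun s => ?_, fun h => ?_⟩
    · first | exact isOpen_univ | simp
    · obtain ⟨s, -⟩ := h
      exact ⟨s, fun _ _ _ => trivial⟩
  isOpen_inter := by
    rintro U V ⟨hU1, hU2⟩ ⟨hV1, hV2⟩
    refine ⟨fun s => (hU1 s).inter (hV1 s), fun h => ?_⟩
    obtain ⟨tU, htU⟩ := hU2 ⟨h.choose, h.choose_spec.1⟩
    obtain ⟨tV, htV⟩ := hV2 ⟨h.choose, h.choose_spec.2⟩
    obtain ⟨t, ht1, ht2⟩ := directed_of (· ≤ ·) tU tV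
    exact ⟨t, fun s hs a => ⟨htU s (lt_of_le_of_lt ht1 hs) a, htV s (lt_of_le_of_lt ht2 hs) a⟩⟩
  isOpen_sUnion := by
    intro C hC
    constructor
    · intro s
      have : {a : A | Quot.mk (wedgeRel S A a₀) (s, a) ∈ ⋃₀ C} =
          ⋃ U ∈ C, {a : A | Quot.mk (wedgeRel S A a₀) (s, a) ∈ U} := by
        ext a
        simp only [Set.mem_setOf_eq, Set.mem_sUnion, Set.mem_iUnion, exists_prop]
        exact Iff.rfl
      rw [this]
      exact isOpen_biUnion fun U hU => (hC U hU).1 s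
    · rintro ⟨s, hs⟩
      obtain ⟨U, hUC, hsU⟩ := hs
      obtain ⟨t, ht⟩ := (hC U hUC).2 ⟨s, hsU⟩
      exact ⟨t, fun s' hs' a => ⟨U, hUC, ht s' hs' a⟩⟩

/-- An arc-hedgehog over a directed set `S`: the directed wedge of copies of `([0,1], 0)`. -/
def ArcHedgehog (S : Type*) : Type _ := Wedge S I 0

instance (S : Type*) [Preorder S] [IsDirected S (· ≤ ·)] : TopologicalSpace (ArcHedgehog S) :=
  Wedge.instTopologicalSpace S I 0

/-- `p` is an arc-hedgehog covering: maps from arc-hedgehogs lift uniquely. -/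
def IsArcHedgehogCovering {E : Type*} {B : Type*} [TopologicalSpace E] [TopologicalSpace B]
    (p : C(E, B)) : Prop :=
  ∀ (S : Type u) [Preorder S] [IsDirected S (· ≤ ·)],
    ∀ (e₀ : E) (f : C(ArcHedgehog S, B)) (z₀ : ArcHedgehog S), f z₀ = p e₀ →
      ∃! g : C(ArcHedgehog S, E), p.comp g = f ∧ g z₀ = e₀

/-- The closed unit `2`-disk. -/
noncomputable def Disk : Type := Metric.closedBall (0 : EuclideanSpace ℝ (Fin 2)) 1

noncomputable instance : TopologicalSpace Disk := by unfold Disk; infer_instance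

/-- The center of the disk. -/
noncomputable def Disk.center : Disk := ⟨0, by simp⟩

/-- A disk-hedgehog over a directed set `S`: the directed wedge of copies of the pointed disk. -/
def DiskHedgehog (S : Type*) : Type _ := Wedge S Disk Disk.center

noncomputable instance (S : Type*) [Preorder S] [IsDirected S (· ≤ ·)] : TopologicalSpace (DiskHedgehog S) :=
  Wedge.instTopologicalSpace S Disk Disk.center

/-- `p` is a disk-hedgehog covering: maps from disk-hedgehogs lift uniquely. -/
def IsDiskHedgehogCovering {E : Type*} {B : Type*} [TopologicalSpace E] [TopologicalSpace B]
    (p : C(E, B)) : Prop :=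
  ∀ (S : Type u) [Preorder S] [IsDirected S (· ≤ ·)],
    ∀ (e₀ : E) (f : C(DiskHedgehog S, B)) (z₀ : DiskHedgehog S), f z₀ = p e₀ →
      ∃! g : C(DiskHedgehog S, E), p.comp g = f ∧ g z₀ = e₀

/-- `p` is a disk-covering: maps from the closed `2`-disk lift uniquely. -/
def IsDiskCovering {E : Type*} {B : Type*} [TopologicalSpace E] [TopologicalSpace B]
    (p : C(E, B)) : Prop :=
  ∀ (e₀ : E) (f : C(Disk, B)) (d₀ : Disk), f d₀ = p e₀ →
    ∃! g : C(Disk, E), p.comp g = f ∧ g d₀ = e₀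

/-- Path components of preimages of neighborhoods form a neighborhood basis of the
total space. -/
def HedgehogBasisCondition {E : Type*} {B : Type*} [TopologicalSpace E] [TopologicalSpace B]
    (p : C(E, B)) : Prop :=
  ∀ (e₀ : E) (U : Set E), IsOpen U → e₀ ∈ U →
    ∃ V ∈ 𝓝 (p e₀), {y : E | JoinedIn (p ⁻¹' V) e₀ y} ⊆ U

/-- The monodromy relation on loops at `b₀`: two loops are identified iff any two of
their lifts starting at the same point end at the same point. -/
def MonodromyRel {E : Type*} {B : Type*} [TopologicalSpace E] [TopologicalSpace B]
    (p : C(E, B)) (b₀ : B) (α β : Path b₀ b₀) : Prop :=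
  ∀ g h : C(I, E), (∀ t, p (g t) = α t) → (∀ t, p (h t) = β t) →
    g 0 = h 0 → g 1 = h 1

/-- `p` is regular: for each loop in `B`, all lifts are loops or all lifts are non-loops. -/
def IsRegularCovering {E : Type*} {B : Type*} [TopologicalSpace E] [TopologicalSpace B]
    (p : C(E, B)) : Prop :=
  ∀ (b : B) (α : Path b b) (g h : C(I, E)),
    (∀ t, p (g t) = α t) → (∀ t, p (h t) = α t) → g 0 = g 1 → h 0 = h 1

/-- Two loops `α, β` at `b₀` are monodromy-equivalent for the hedgehog fundamental
group iff for every disk-hedgehog covering with Peano total space, lifts of `α` and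
`β` starting at the same point end at the same point.  (This is the equality of the
classes of `α` and `β` in the monodromy group of the maximal disk-hedgehog covering.) -/
def HedgehogLoopEq {B : Type u} [TopologicalSpace B] (b₀ : B) (α β : C(I, B)) : Prop :=
  ∀ (E' : Type u) [TopologicalSpace E'] [ConnectedSpace E'] [LocallyPathConnectedSpace E']
    (q : C(E', B)), IsDiskHedgehogCovering.{u} q →
    ∀ g h : C(I, E'), (∀ t, q (g t) = α t) → (∀ t, q (h t) = β t) →
      g 0 = h 0 → g 1 = h 1

section Aux
open Set Filter

theorem locPathConnected_of_convex {F : Type*} [NormedAddCommGroup F] [NormedSpace ℝ F]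
    {K : Set F} (hK : Convex ℝ K) : LocallyPathConnectedSpace K := by
  refine LocPathConnectedSpace.of_bases (ι := ℝ) (p := fun _ ε => 0 < ε)
    (s := fun x ε => Subtype.val ⁻¹' Metric.ball (x : F) ε) (fun x => ?_) (fun x ε hε => ?_)
  · rw [nhds_induced]
    exact Metric.nhds_basis_ball.comap _
  · rw [Topology.IsInducing.subtypeVal.isPathConnected_iff, Subtype.image_preimage_val]
    exact (hK.inter (convex_ball _ _)).isPathConnected ⟨x, x.2, Metric.mem_ball_self hε⟩

theorem pathConnectedSpace_of_convex {F : Type*} [NormedAddCommGroup F] [NormedSpace ℝ F]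
    {K : Set F} (hK : Convex ℝ K) (hne : K.Nonempty) : PathConnectedSpace K :=
  isPathConnected_iff_pathConnectedSpace.mp (hK.isPathConnected hne)

instance : LocallyPathConnectedSpace I := locPathConnected_of_convex (convex_Icc 0 1)
instance : PathConnectedSpace I := pathConnectedSpace_of_convex (convex_Icc 0 1) ⟨0, by simp⟩

noncomputable instance : LocallyPathConnectedSpace Disk := by
  unfold Disk; exact locPathConnected_of_convex (convex_closedBall _ _)
noncomputable instance : PathConnectedSpace Disk := by
  unfold Disk; exact pathConnectedSpace_of_convex (convex_closedBall _ _) ⟨0, by simp⟩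
noncomputable instance : T1Space Disk := by
  unfold Disk; infer_instance

namespace Wedge

variable {S A : Type*} {a₀ : A}

/-- Abbreviation for points of the wedge. -/
abbrev wmk (a₀ : A) (s : S) (a : A) : Wedge S A a₀ := Quot.mk (wedgeRel S A a₀) (s, a)

theorem wedgeRel_equivalence : Equivalence (wedgeRel S A a₀) where
  refl x := Or.inl rfl
  symm h := by
    rcases h with h | ⟨h1, h2⟩
    · exact Or.inl h.symm
    · exact Or.inr ⟨h2, h1⟩
  trans h h' := by
    rcases h with h | ⟨h1, h2⟩ <;> rcases h' with h' | ⟨h1', h2'⟩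
    · exact Or.inl (h.trans h')
    · exact Or.inr ⟨by rw [h]; exact h1', h2'⟩
    · exact Or.inr ⟨h1, by rw [← h']; exact h2⟩
    · exact Or.inr ⟨h1, h2'⟩

theorem wmk_eq_iff {s s' : S} {a a' : A} :
    wmk a₀ s a = wmk a₀ s' a' ↔ (s, a) = (s', a') ∨ (a = a₀ ∧ a' = a₀) := by
  rw [show wmk a₀ s a = wmk a₀ s' a' ↔ Relation.EqvGen (wedgeRel S A a₀) (s, a) (s', a') from
    ⟨Quot.eqvGen_exact, Quot.eqvGen_sound⟩]
  constructor
  · intro h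
    exact (Equivalence.eqvGen_iff wedgeRel_equivalence).mp h
  · intro h
    exact Relation.EqvGen.rel _ _ h

theorem pt_eq (s s' : S) : wmk a₀ s a₀ = wmk a₀ s' a₀ := Quot.sound (Or.inr ⟨rfl, rfl⟩)

variable [Preorder S] [IsDirected S (· ≤ ·)] [TopologicalSpace A]

theorem isOpen_iff {U : Set (Wedge S A a₀)} :
    IsOpen U ↔ (∀ s : S, IsOpen {a : A | wmk a₀ s a ∈ U}) ∧
      ((∃ s : S, wmk a₀ s a₀ ∈ U) →
        ∃ t : S, ∀ s : S, t < s → ∀ a : A, wmk a₀ s a ∈ U) := Iff.rfl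

/-- The inclusion of the `s`-th spine. -/
def incl (a₀ : A) (s : S) : C(A, Wedge S A a₀) where
  toFun a := wmk a₀ s a
  continuous_toFun := by
    rw [continuous_def]
    intro U hU
    exact (isOpen_iff.mp hU).1 s

@[simp] theorem incl_apply (s : S) (a : A) : incl a₀ s a = wmk a₀ s a := rfl

/-- Spine-wise defined continuous maps out of a wedge. -/
def liftCM {Y : Type*} [TopologicalSpace Y] (F : S → C(A, Y)) (y₀ : Y)
    (h0 : ∀ s, F s a₀ = y₀)
    (hcof : ∀ O : Set Y, IsOpen O → y₀ ∈ O → ∃ t : S, ∀ s, t < s → ∀ a, F s a ∈ O) :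
    C(Wedge S A a₀, Y) where
  toFun := Quot.lift (fun x => F x.1 x.2) (by
    rintro ⟨s, a⟩ ⟨s', a'⟩ (h | ⟨h1, h2⟩)
    · rw [h]
    · simp only at h1 h2
      simp only [h1, h2]
      exact (h0 s).trans (h0 s').symm)
  continuous_toFun := by
    refine continuous_def.mpr ?_
    intro O hO
    rw [isOpen_iff]
    constructor
    · intro s
      exact (F s).continuous.isOpen_preimage O hO
    · rintro ⟨s, hs⟩
      replace hs : F s a₀ ∈ O := hs
      exact hcof O hO (h0 s ▸ hs)

@[simp] theorem liftCM_wmk {Y : Type*} [TopologicalSpace Y] (F : S → C(A, Y)) (y₀ : Y)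
    (h0 : ∀ s, F s a₀ = y₀) (hcof) (s : S) (a : A) :
    liftCM F y₀ h0 hcof (wmk a₀ s a) = F s a := rfl

/-- The map between wedges induced by a pointed continuous map. -/
def map {A' : Type*} [TopologicalSpace A'] {a₀' : A'} (φ : C(A, A')) (hφ : φ a₀ = a₀') :
    C(Wedge S A a₀, Wedge S A' a₀') where
  toFun := Quot.map (fun x => (x.1, φ x.2)) (by
    rintro ⟨s, a⟩ ⟨s', a'⟩ (h | ⟨h1, h2⟩)
    · rw [h]; exact Or.inl rfl
    · simp only at h1 h2
      exact Or.inr ⟨by simp [h1, hφ], by simp [h2, hφ]⟩)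
  continuous_toFun := by
    refine continuous_def.mpr ?_
    intro U hU
    rw [isOpen_iff]
    rcases isOpen_iff.mp hU with ⟨hU1, hU2⟩
    constructor
    · intro s
      exact (hU1 s).preimage φ.continuous
    · rintro ⟨s, hs⟩
      change Quot.map (fun x : S × A => (x.1, φ x.2)) _ (wmk a₀ s a₀) ∈ U at hs
      have : wmk a₀' s a₀' ∈ U := by
        have := hs
        rwa [show Quot.map (fun x : S × A => (x.1, φ x.2)) _ (wmk a₀ s a₀) = wmk a₀' s (φ a₀)
          from rfl, hφ] at this
      obtain ⟨t, ht⟩ := hU2 ⟨s, this⟩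
      exact ⟨t, fun s' hs' a => ht s' hs' (φ a)⟩

@[simp] theorem map_wmk {A' : Type*} [TopologicalSpace A'] {a₀' : A'} (φ : C(A, A'))
    (hφ : φ a₀ = a₀') (s : S) (a : A) : map φ hφ (wmk a₀ s a) = wmk a₀' s (φ a) := rfl

end Wedge

end Aux
section Aux2
open Set Filter

/-- The underlying point of the plane of a disk element. -/
noncomputable def Disk.pt (d : Disk) : EuclideanSpace ℝ (Fin 2) := Subtype.val d

theorem Disk.continuous_pt : Continuous Disk.pt := continuous_subtype_val

@[simp] theorem Disk.pt_center : Disk.pt Disk.center = 0 := rfl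

/-- A continuous retraction `Disk → I`. -/
noncomputable def diskToI : C(Disk, I) where
  toFun d := ⟨min 1 |Disk.pt d 0|, by
    constructor
    · exact le_min zero_le_one (abs_nonneg _)
    · exact min_le_left _ _⟩
  continuous_toFun := by
    apply Continuous.subtype_mk
    exact continuous_const.min ((continuous_apply (0 : Fin 2)).comp
      ((PiLp.continuous_ofLp 2 _).comp Disk.continuous_pt)).abs

theorem diskToI_coe (d : Disk) : (diskToI d : ℝ) = min 1 |Disk.pt d 0| := rfl

/-- A continuous section `I → Disk` of `diskToI`. -/
noncomputable def iToDisk : C(I, Disk) where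
  toFun t := Subtype.mk ((t : ℝ) • EuclideanSpace.single (0 : Fin 2) (1 : ℝ)) (by
    simp only [Metric.mem_closedBall, dist_zero_right, norm_smul]
    calc ‖(t : ℝ)‖ * ‖EuclideanSpace.single (0 : Fin 2) (1 : ℝ)‖
        = (t : ℝ) * 1 := by
          rw [EuclideanSpace.norm_single, Real.norm_of_nonneg t.2.1, norm_one]
      _ ≤ 1 := by rw [mul_one]; exact t.2.2)
  continuous_toFun := by
    apply Continuous.subtype_mk
    exact (continuous_subtype_val.smul continuous_const)

theorem iToDisk_pt (t : I) : Disk.pt (iToDisk t) =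
    (t : ℝ) • EuclideanSpace.single (0 : Fin 2) (1 : ℝ) := rfl

@[simp] theorem diskToI_iToDisk (t : I) : diskToI (iToDisk t) = t := by
  apply Subtype.ext
  rw [diskToI_coe, iToDisk_pt]
  have : ((t : ℝ) • EuclideanSpace.single (0 : Fin 2) (1 : ℝ)) 0 = (t : ℝ) := by
    simp [EuclideanSpace.single_apply]
  rw [this, abs_of_nonneg t.2.1, min_eq_right t.2.2]

@[simp] theorem iToDisk_zero : iToDisk 0 = Disk.center := by
  apply Subtype.ext
  show ((0 : I) : ℝ) • EuclideanSpace.single (0 : Fin 2) (1 : ℝ) = Subtype.val Disk.center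
  have : Subtype.val Disk.center = (0 : EuclideanSpace ℝ (Fin 2)) := rfl
  rw [this]
  simp

@[simp] theorem diskToI_center : diskToI Disk.center = 0 := by
  rw [← iToDisk_zero, diskToI_iToDisk]

section PathLift

variable {E B : Type u} [TopologicalSpace E] [TopologicalSpace B] {p : C(E, B)}

/-- The retraction from the one-spined disk hedgehog to `I`. -/
noncomputable def punitHedgehogToI : C(DiskHedgehog PUnit.{u + 1}, I) :=
  Wedge.liftCM (fun _ => diskToI) 0 (fun _ => diskToI_center)
    (fun _ _ _ => ⟨PUnit.unit, fun s hs => absurd hs (lt_irrefl _)⟩)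

/-- Unique path lifting for disk-hedgehog coverings. -/
theorem pathlift (hp : IsDiskHedgehogCovering.{u} p) (e : E) (γ : C(I, B))
    (hγ : γ 0 = p e) : ∃! g : C(I, E), (∀ t, p (g t) = γ t) ∧ g 0 = e := by
  classical
  set ρ : C(DiskHedgehog PUnit.{u + 1}, I) := punitHedgehogToI
  set z₀ : DiskHedgehog PUnit.{u + 1} := Wedge.wmk Disk.center PUnit.unit Disk.center
  have hρz₀ : ρ z₀ = 0 := diskToI_center
  have hFz₀ : (γ.comp ρ) z₀ = p e := by
    show γ (ρ z₀) = p e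
    rw [hρz₀, hγ]
  obtain ⟨G, ⟨hG1, hG2⟩, hGu⟩ := hp PUnit.{u + 1} e (γ.comp ρ) z₀ hFz₀
  set j : C(I, DiskHedgehog PUnit.{u + 1}) := (Wedge.incl (S := PUnit.{u + 1}) Disk.center PUnit.unit).comp iToDisk
  have hρj : ∀ t, ρ (j t) = t := fun t => by
    show ρ (Wedge.wmk Disk.center PUnit.unit (iToDisk t)) = t
    rw [show ρ (Wedge.wmk Disk.center PUnit.unit (iToDisk t)) = diskToI (iToDisk t) from rfl,
      diskToI_iToDisk]
  have hj0 : j 0 = z₀ := by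
    show Wedge.wmk Disk.center PUnit.unit (iToDisk 0) = z₀
    rw [iToDisk_zero]
  refine ⟨G.comp j, ⟨fun t => ?_, ?_⟩, fun g' ⟨hg'1, hg'2⟩ => ?_⟩
  · have := ContinuousMap.congr_fun hG1 (j t)
    simp only [ContinuousMap.comp_apply] at this ⊢
    rw [this]
    show γ (ρ (j t)) = γ t
    rw [hρj]
  · show G (j 0) = e
    rw [hj0, hG2]
  · have : g'.comp ρ = G := by
      apply hGu
      refine ⟨?_, ?_⟩
      · ext z
        show p (g' (ρ z)) = γ (ρ z)
        exact hg'1 _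
      · show g' (ρ z₀) = e
        rw [hρz₀, hg'2]
    ext t
    show g' t = G (j t)
    rw [← this]
    show g' t = g' (ρ (j t))
    rw [hρj]

/-- The canonical lift of a continuous path. -/
noncomputable def theLift (hp : IsDiskHedgehogCovering.{u} p) (e : E) (γ : C(I, B))
    (hγ : γ 0 = p e) : C(I, E) :=
  (pathlift hp e γ hγ).exists.choose

theorem theLift_spec (hp : IsDiskHedgehogCovering.{u} p) (e : E) (γ : C(I, B))
    (hγ : γ 0 = p e) : (∀ t, p (theLift hp e γ hγ t) = γ t) ∧ theLift hp e γ hγ 0 = e :=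
  (pathlift hp e γ hγ).exists.choose_spec

theorem theLift_unique (hp : IsDiskHedgehogCovering.{u} p) (e : E) (γ : C(I, B))
    (hγ : γ 0 = p e) (g : C(I, E)) (hg1 : ∀ t, p (g t) = γ t) (hg2 : g 0 = e) :
    g = theLift hp e γ hγ :=
  (pathlift hp e γ hγ).unique ⟨hg1, hg2⟩ (theLift_spec hp e γ hγ)

end PathLift

end Aux2
section Aux3
open Set Filter

/-- The map `t ↦ t/2` on the unit interval. -/
noncomputable def halfLow : C(I, I) where
  toFun t := ⟨(t : ℝ) / 2, ⟨div_nonneg t.2.1 (by norm_num), by linarith [t.2.2]⟩⟩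
  continuous_toFun := (continuous_subtype_val.div_const 2).subtype_mk _

/-- The map `t ↦ (t+1)/2` on the unit interval. -/
noncomputable def halfHigh : C(I, I) where
  toFun t := ⟨((t : ℝ) + 1) / 2,
    ⟨div_nonneg (by linarith [t.2.1]) (by norm_num), by linarith [t.2.2]⟩⟩
  continuous_toFun := (((continuous_subtype_val).add continuous_const).div_const 2).subtype_mk _

/-- Reversal of the unit interval as a continuous map. -/
noncomputable def revCM : C(I, I) := ⟨unitInterval.symm, unitInterval.continuous_symm⟩

theorem trans_halfLow {Z : Type*} [TopologicalSpace Z] {a b c : Z} (α : Path a b)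
    (β : Path b c) (t : I) : (α.trans β) (halfLow t) = α t := by
  have hc : ((halfLow t : I) : ℝ) ≤ 1 / 2 := by
    show (t : ℝ) / 2 ≤ 1 / 2
    linarith [t.2.2]
  rw [Path.trans_apply, dif_pos hc]
  congr 1
  apply Subtype.ext
  show 2 * ((t : ℝ) / 2) = t
  ring

theorem trans_halfHigh {Z : Type*} [TopologicalSpace Z] {a b c : Z} (α : Path a b)
    (β : Path b c) (t : I) : (α.trans β) (halfHigh t) = β t := by
  by_cases hc : ((halfHigh t : I) : ℝ) ≤ 1 / 2
  · have ht0 : t = 0 := by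
      apply Subtype.ext
      have : ((t : ℝ) + 1) / 2 ≤ 1 / 2 := hc
      have h1 : (t : ℝ) ≤ 0 := by linarith
      exact le_antisymm h1 t.2.1
    subst ht0
    rw [Path.trans_apply, dif_pos hc]
    have key : ∀ (u : I), u = 1 → α u = β 0 := by
      intro u hu
      rw [hu, show α 1 = b from α.target, show β 0 = b from β.source]
    apply key
    apply Subtype.ext
    show 2 * ((((0 : I) : ℝ) + 1) / 2) = 1
    norm_num
  · rw [Path.trans_apply, dif_neg hc]
    congr 1
    apply Subtype.ext
    show 2 * (((t : ℝ) + 1) / 2) - 1 = t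
    ring

section LiftPath

variable {E B : Type u} [TopologicalSpace E] [TopologicalSpace B] {p : C(E, B)}

/-- The canonical lift of a path. -/
noncomputable def liftPath (hp : IsDiskHedgehogCovering.{u} p) {a b : B} (e : E)
    (α : Path a b) (h : a = p e) : C(I, E) :=
  theLift hp e α.toContinuousMap
    (by rw [show α.toContinuousMap 0 = α 0 from rfl, α.source, h])

theorem p_liftPath (hp : IsDiskHedgehogCovering.{u} p) {a b : B} (e : E) (α : Path a b)
    (h : a = p e) (t : I) : p (liftPath hp e α h t) = α t :=
  (theLift_spec hp e _ _).1 t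

theorem liftPath_zero (hp : IsDiskHedgehogCovering.{u} p) {a b : B} (e : E) (α : Path a b)
    (h : a = p e) : liftPath hp e α h 0 = e :=
  (theLift_spec hp e _ _).2

/-- The endpoint of the canonical lift of a path. -/
noncomputable def liftEnd (hp : IsDiskHedgehogCovering.{u} p) {a b : B} (e : E)
    (α : Path a b) (h : a = p e) : E :=
  liftPath hp e α h 1

theorem p_liftEnd (hp : IsDiskHedgehogCovering.{u} p) {a b : B} (e : E) (α : Path a b)
    (h : a = p e) : p (liftEnd hp e α h) = b :=
  (p_liftPath hp e α h 1).trans α.target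

theorem liftPath_unique (hp : IsDiskHedgehogCovering.{u} p) {a b : B} (e : E) (α : Path a b)
    (h : a = p e) (g : C(I, E)) (hg1 : ∀ t, p (g t) = α t) (hg2 : g 0 = e) :
    g = liftPath hp e α h :=
  theLift_unique hp e _ _ g hg1 hg2

theorem liftEnd_trans (hp : IsDiskHedgehogCovering.{u} p) {a b c : B} (e : E)
    (α : Path a b) (β : Path b c) (h : a = p e) :
    liftEnd hp e (α.trans β) h =
      liftEnd hp (liftEnd hp e α h) β (p_liftEnd hp e α h).symm := by
  set L := liftPath hp e (α.trans β) h with hL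
  have h1 : L.comp halfLow = liftPath hp e α h := by
    apply liftPath_unique
    · intro t
      show p (L (halfLow t)) = α t
      rw [p_liftPath, trans_halfLow]
    · show L (halfLow 0) = e
      have h0 : halfLow 0 = 0 := by apply Subtype.ext; show ((0 : I) : ℝ) / 2 = 0; norm_num
      rw [h0, hL, liftPath_zero]
  have mid : L (halfLow 1) = liftEnd hp e α h := ContinuousMap.congr_fun h1 1
  have h2 : L.comp halfHigh = liftPath hp (liftEnd hp e α h) β (p_liftEnd hp e α h).symm := by
    apply liftPath_unique
    · intro t
      show p (L (halfHigh t)) = β t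
      rw [p_liftPath, trans_halfHigh]
    · show L (halfHigh 0) = liftEnd hp e α h
      have h0 : halfHigh 0 = halfLow 1 := by
        apply Subtype.ext
        show (((0 : I) : ℝ) + 1) / 2 = ((1 : I) : ℝ) / 2
        norm_num
      rw [h0, mid]
  have h3 : L (halfHigh 1) = liftEnd hp (liftEnd hp e α h) β (p_liftEnd hp e α h).symm :=
    ContinuousMap.congr_fun h2 1
  have h4 : halfHigh 1 = 1 := by
    apply Subtype.ext
    show (((1 : I) : ℝ) + 1) / 2 = 1
    norm_num
  rw [h4] at h3
  exact h3

theorem liftEnd_symm (hp : IsDiskHedgehogCovering.{u} p) {a b : B} (e : E)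
    (α : Path a b) (h : a = p e) :
    liftEnd hp (liftEnd hp e α h) α.symm (p_liftEnd hp e α h).symm = e := by
  set L := liftPath hp e α h with hL
  have h1 : L.comp revCM = liftPath hp (liftEnd hp e α h) α.symm (p_liftEnd hp e α h).symm := by
    apply liftPath_unique
    · intro t
      show p (L (unitInterval.symm t)) = α.symm t
      rw [p_liftPath]
      rfl
    · show L (unitInterval.symm 0) = liftEnd hp e α h
      rw [unitInterval.symm_zero]
      rfl
  have h2 : L (unitInterval.symm 1) = liftEnd hp (liftEnd hp e α h) α.symm
      (p_liftEnd hp e α h).symm := ContinuousMap.congr_fun h1 1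
  rw [unitInterval.symm_one] at h2
  rw [← h2, hL, liftPath_zero]

end LiftPath

end Aux3
section Aux4
open Set Filter

namespace Wedge

variable {S A : Type*} [Preorder S] [IsDirected S (· ≤ ·)] [TopologicalSpace A]
  [LocallyPathConnectedSpace A] [PathConnectedSpace A] [T1Space A] {a₀ : A}

theorem locPathConnected : LocallyPathConnectedSpace (Wedge S A a₀) := by
  constructor
  intro z
  rw [Filter.hasBasis_self]
  intro W hW
  obtain ⟨Wo, hWoSub, hWoOpen, hzWo⟩ := mem_nhds_iff.mp hW
  suffices h : ∃ V : Set (Wedge S A a₀), IsOpen V ∧ IsPathConnected V ∧ z ∈ V ∧ V ⊆ Wo by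
    obtain ⟨V, hVo, hVpc, hzV, hVsub⟩ := h
    exact ⟨V, hVo.mem_nhds hzV, hVpc, hVsub.trans hWoSub⟩
  clear hW hWoSub W
  induction z using Quot.ind with
  | _ x =>
  obtain ⟨s, a⟩ := x
  rcases isOpen_iff.mp hWoOpen with ⟨hW1, hW2⟩
  by_cases ha : a = a₀
  · -- wedge point case
    subst a
    obtain ⟨t₀, ht₀⟩ := hW2 ⟨s, hzWo⟩
    set Tr : S → Set A := fun s' => {b | wmk a₀ s' b ∈ Wo} with hTr
    set C : S → Set A := fun s' => pathComponentIn (Tr s') a₀ with hC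
    have haTr : ∀ s', a₀ ∈ Tr s' := fun s' => by
      show wmk a₀ s' a₀ ∈ Wo
      rw [pt_eq s' s]
      exact hzWo
    refine ⟨{z | ∃ s' b, z = wmk a₀ s' b ∧ (t₀ < s' ∨ b ∈ C s')}, ?_, ?_, ?_, ?_⟩
    · rw [isOpen_iff]
      constructor
      · intro s'
        by_cases hlt : t₀ < s'
        · have : {b | wmk a₀ s' b ∈ {z | ∃ s' b, z = wmk a₀ s' b ∧ (t₀ < s' ∨ b ∈ C s')}} =
              univ := eq_univ_of_forall (fun b => ⟨s', b, rfl, Or.inl hlt⟩)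
          rw [this]
          exact isOpen_univ
        · have : {b | wmk a₀ s' b ∈ {z | ∃ s' b, z = wmk a₀ s' b ∧ (t₀ < s' ∨ b ∈ C s')}} =
              C s' := by
            ext b
            constructor
            · rintro ⟨s'', b', heq, hcond⟩
              rcases wmk_eq_iff.mp heq with heq' | ⟨hb, hb'⟩
              · obtain ⟨hs, hb⟩ := Prod.mk.injEq .. ▸ (by exact heq' : (s', b) = (s'', b'))
                subst hs; rw [Prod.ext_iff] at heq'
                obtain ⟨-, hb2⟩ := heq'
                simp only at hb2
                rw [hb2]
                rcases hcond with h | h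
                · exact absurd h hlt
                · exact h
              · rw [hb]
                exact mem_pathComponentIn_self (haTr s')
            · intro hb
              exact ⟨s', b, rfl, Or.inr hb⟩
          rw [this]
          exact (hW1 s').pathComponentIn a₀
      · intro _
        exact ⟨t₀, fun s' hs' b => ⟨s', b, rfl, Or.inl hs'⟩⟩
    · refine ⟨wmk a₀ s a₀, ⟨s, a₀, rfl, Or.inr (mem_pathComponentIn_self (haTr s))⟩, ?_⟩
      intro y hy
      obtain ⟨s', b, rfl, hcond⟩ := hy
      rcases hcond with hlt | hb
      · set δ := PathConnectedSpace.somePath a₀ b with hδ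
        refine ⟨((δ.map (incl a₀ s').continuous).cast (pt_eq s s') rfl), fun t => ?_⟩
        exact ⟨s', δ t, rfl, Or.inl hlt⟩
      · have hpc : IsPathConnected (C s') := isPathConnected_pathComponentIn (haTr s')
        obtain ⟨δ, hδ⟩ := hpc.joinedIn a₀ (mem_pathComponentIn_self (haTr s')) b hb
        refine ⟨((δ.map (incl a₀ s').continuous).cast (pt_eq s s') rfl), fun t => ?_⟩
        exact ⟨s', δ t, rfl, Or.inr (hδ t)⟩
    · exact ⟨s, a₀, rfl, Or.inr (mem_pathComponentIn_self (haTr s))⟩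
    · rintro y ⟨s', b, rfl, hcond⟩
      rcases hcond with hlt | hb
      · exact ht₀ s' hlt b
      · have hbtr : b ∈ Tr s' := pathComponentIn_subset hb
        exact hbtr
  · -- non-wedge point case
    set O : Set A := {b | wmk a₀ s b ∈ Wo} ∩ {b | b ≠ a₀} with hO
    have hOopen : IsOpen O := (hW1 s).inter isOpen_ne
    have haO : a ∈ O := ⟨hzWo, ha⟩
    set C : Set A := pathComponentIn O a with hCdef
    have hCO : C ⊆ O := pathComponentIn_subset
    refine ⟨{z | ∃ b, z = wmk a₀ s b ∧ b ∈ C}, ?_, ?_, ?_, ?_⟩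
    · rw [isOpen_iff]
      constructor
      · intro s'
        by_cases hss : s' = s
        · subst hss
          have : {b | wmk a₀ s' b ∈ {z | ∃ b, z = wmk a₀ s' b ∧ b ∈ C}} = C := by
            ext b
            constructor
            · rintro ⟨b', heq, hb'⟩
              rcases wmk_eq_iff.mp heq with heq' | ⟨hb, hb''⟩
              · rw [Prod.ext_iff] at heq'
                obtain ⟨-, hb2⟩ := heq'
                simp only at hb2
                rwa [hb2]
              · exact absurd hb'' (hCO hb').2
            · intro hb
              exact ⟨b, rfl, hb⟩
          rw [this]
          exact hOopen.pathComponentIn a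
        · have : {b | wmk a₀ s' b ∈ {z | ∃ b, z = wmk a₀ s b ∧ b ∈ C}} = ∅ := by
            ext b
            simp only [mem_setOf_eq, mem_empty_iff_false, iff_false]
            rintro ⟨b', heq, hb'⟩
            rcases wmk_eq_iff.mp heq with heq' | ⟨hb, hb''⟩
            · rw [Prod.ext_iff] at heq'
              exact hss heq'.1
            · exact absurd hb'' (hCO hb').2
          rw [this]
          exact isOpen_empty
      · rintro ⟨s'', hs''⟩
        obtain ⟨b', heq, hb'⟩ := hs''
        rcases wmk_eq_iff.mp heq with heq' | ⟨-, hb''⟩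
        · rw [Prod.ext_iff] at heq'
          obtain ⟨-, hb2⟩ := heq'
          simp only at hb2
          exact absurd rfl (hb2 ▸ (hCO hb').2)
        · exact absurd hb'' (hCO hb').2
    · have hpcC : IsPathConnected C := isPathConnected_pathComponentIn haO
      have := hpcC.image (incl a₀ s).continuous
      have himg : (incl a₀ s) '' C = {z | ∃ b, z = wmk a₀ s b ∧ b ∈ C} := by
        ext y
        constructor
        · rintro ⟨b, hb, rfl⟩
          exact ⟨b, rfl, hb⟩
        · rintro ⟨b, rfl, hb⟩
          exact ⟨b, hb, rfl⟩
      rwa [himg] at this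
    · exact ⟨a, rfl, mem_pathComponentIn_self haO⟩
    · rintro y ⟨b, rfl, hb⟩
      exact (hCO hb).1

end Wedge

noncomputable instance (S : Type*) [Preorder S] [IsDirected S (· ≤ ·)] :
    LocallyPathConnectedSpace (DiskHedgehog S) := Wedge.locPathConnected

end Aux4
section Aux5
open Set Filter TopologicalSpace

/-- Wrapper carrying the locally path-connected coreflection topology. -/
structure PE (E : Type u) where
  ofE ::
  toE : E

variable {E : Type u} [TopologicalSpace E]

/-- The generators of the coreflection topology: path components of open sets. -/
def peGens (E : Type u) [TopologicalSpace E] : Set (Set (PE E)) :=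
  {C | ∃ (U : Set E) (x : E), IsOpen U ∧ x ∈ U ∧ C = PE.toE ⁻¹' pathComponentIn U x}

instance PE.instTopologicalSpace : TopologicalSpace (PE E) := generateFrom (peGens E)

theorem PE.isOpen_of {U : Set E} (h : IsOpen U) : IsOpen (PE.toE ⁻¹' U : Set (PE E)) := by
  have heq : (PE.toE ⁻¹' U : Set (PE E)) =
      ⋃ x ∈ U, PE.toE ⁻¹' pathComponentIn U x := by
    ext y
    simp only [mem_preimage, mem_iUnion, exists_prop]
    constructor
    · intro hy
      exact ⟨PE.toE y, hy, mem_pathComponentIn_self hy⟩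
    · rintro ⟨x, hx, hy⟩
      exact pathComponentIn_subset hy
  rw [heq]
  exact isOpen_biUnion fun x hx => isOpen_generateFrom_of_mem ⟨U, x, h, hx, rfl⟩

theorem PE.continuous_toE : Continuous (PE.toE : PE E → E) := by
  rw [continuous_def]
  intro U hU
  exact PE.isOpen_of hU

theorem PE.continuous_ofE_comp {Z : Type*} [TopologicalSpace Z] [LocallyPathConnectedSpace Z]
    {h : Z → E} (hc : Continuous h) : Continuous (fun z => PE.ofE (h z)) := by
  rw [continuous_generateFrom_iff]
  rintro C ⟨U, x, hU, hx, rfl⟩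
  show IsOpen {z : Z | h z ∈ pathComponentIn U x}
  rw [isOpen_iff_mem_nhds]
  intro z hz
  have hz' : h z ∈ pathComponentIn U x := hz
  have hU' : h ⁻¹' U ∈ 𝓝 z := hc.continuousAt.preimage_mem_nhds
    (hU.mem_nhds (pathComponentIn_subset hz'))
  obtain ⟨V, ⟨hVo, hzV, hVpc⟩, hVsub⟩ := (isOpen_isPathConnected_basis z).mem_iff.mp hU'
  have himg : h '' V ⊆ pathComponentIn U (h z) :=
    (hVpc.image hc).subset_pathComponentIn ⟨z, hzV, rfl⟩ (image_subset_iff.mpr hVsub)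
  rw [pathComponentIn_congr hz'] at himg
  exact mem_nhds_iff.mpr ⟨V, fun y hy => himg ⟨y, hy, rfl⟩, hVo, hzV⟩

theorem PE.generateOpen_key {W : Set (PE E)} (hW : GenerateOpen (peGens E) W) :
    ∀ z ∈ W, ∃ U : Set E, IsOpen U ∧ PE.toE z ∈ U ∧
      (PE.toE ⁻¹' pathComponentIn U (PE.toE z) : Set (PE E)) ⊆ W := by
  induction hW with
  | basic C hC =>
    rintro z hz
    obtain ⟨U, y, hU, hy, rfl⟩ := hC
    have hz' : PE.toE z ∈ pathComponentIn U y := hz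
    exact ⟨U, hU, pathComponentIn_subset hz', by rw [pathComponentIn_congr hz']⟩
  | univ => exact fun z _ => ⟨univ, isOpen_univ, mem_univ _, subset_univ _⟩
  | inter W1 W2 h1 h2 ih1 ih2 =>
    intro z hz
    obtain ⟨U1, hU1, hx1, hs1⟩ := ih1 z hz.1
    obtain ⟨U2, hU2, hx2, hs2⟩ := ih2 z hz.2
    refine ⟨U1 ∩ U2, hU1.inter hU2, ⟨hx1, hx2⟩, fun y hy => ?_⟩
    have hy' : PE.toE y ∈ pathComponentIn (U1 ∩ U2) (PE.toE z) := hy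
    exact ⟨hs1 (pathComponentIn_mono inter_subset_left hy'),
      hs2 (pathComponentIn_mono inter_subset_right hy')⟩
  | sUnion Ss hSs ih =>
    intro z hz
    obtain ⟨Wm, hWm, hzW⟩ := hz
    obtain ⟨U, hU, hxU, hsub⟩ := ih Wm hWm z hzW
    exact ⟨U, hU, hxU, hsub.trans (subset_sUnion_of_mem hWm)⟩

theorem PE.isPathConnected_gen {U : Set E} (hU : IsOpen U) {x : E} (hx : x ∈ U) :
    IsPathConnected (PE.toE ⁻¹' pathComponentIn U x : Set (PE E)) := by
  refine ⟨PE.ofE x, mem_pathComponentIn_self hx, ?_⟩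
  intro y hy
  have hy' : PE.toE y ∈ pathComponentIn U x := hy
  obtain ⟨γ, hγ⟩ := (isPathConnected_pathComponentIn hx).joinedIn x
    (mem_pathComponentIn_self hx) (PE.toE y) hy'
  exact ⟨⟨⟨fun t => PE.ofE (γ t), PE.continuous_ofE_comp γ.continuous⟩,
    congrArg PE.ofE γ.source, congrArg PE.ofE γ.target⟩, hγ⟩

instance PE.locPathConnectedSpace : LocallyPathConnectedSpace (PE E) := by
  constructor
  intro z
  rw [Filter.hasBasis_self]
  intro t ht
  obtain ⟨W, hWsub, hWopen, hzW⟩ := mem_nhds_iff.mp ht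
  have hgen : GenerateOpen (peGens E) W := hWopen
  obtain ⟨U, hU, hxU, hsub⟩ := PE.generateOpen_key hgen z hzW
  refine ⟨PE.toE ⁻¹' pathComponentIn U (PE.toE z), ?_, ?_, ?_⟩
  · exact (isOpen_generateFrom_of_mem (g := peGens E) ⟨U, PE.toE z, hU, hxU, rfl⟩).mem_nhds
      (mem_pathComponentIn_self hxU)
  · exact PE.isPathConnected_gen hU hxU
  · exact fun y hy => hWsub (hsub hy)

theorem PE.pathConnectedSpace [PathConnectedSpace E] : PathConnectedSpace (PE E) := by
  refine ⟨⟨PE.ofE (Nonempty.some PathConnectedSpace.nonempty)⟩, fun a b => ?_⟩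
  obtain ⟨γ⟩ := PathConnectedSpace.joined (PE.toE a) (PE.toE b)
  exact ⟨⟨⟨fun t => PE.ofE (γ t), PE.continuous_ofE_comp γ.continuous⟩,
    congrArg PE.ofE γ.source, congrArg PE.ofE γ.target⟩⟩

variable {B : Type u} [TopologicalSpace B]

/-- The covering map with Peanoized total space. -/
def pPE (p : C(E, B)) : C(PE E, B) :=
  ⟨fun x => p (PE.toE x), p.continuous.comp PE.continuous_toE⟩

theorem pPE_covering {p : C(E, B)} (hp : IsDiskHedgehogCovering.{u} p) :
    IsDiskHedgehogCovering.{u} (pPE p) := by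
  intro S _ _ e F z₀ hF
  obtain ⟨G, ⟨hG1, hG2⟩, hGu⟩ := hp S (PE.toE e) F z₀ hF
  refine ⟨⟨fun z => PE.ofE (G z), PE.continuous_ofE_comp G.continuous⟩, ⟨?_, ?_⟩, ?_⟩
  · ext z
    exact ContinuousMap.congr_fun hG1 z
  · exact congrArg PE.ofE hG2
  · rintro G'' ⟨h1, h2⟩
    have hkey : (⟨fun z => PE.toE (G'' z),
        PE.continuous_toE.comp G''.continuous⟩ : C(DiskHedgehog S, E)) = G := by
      apply hGu
      exact ⟨by ext z; exact ContinuousMap.congr_fun h1 z, congrArg PE.toE h2⟩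
    ext z
    exact congrArg PE.ofE (ContinuousMap.congr_fun hkey z)

end Aux5
section Aux6
open Set Filter

variable {E B : Type u} [TopologicalSpace E] [TopologicalSpace B] {p : C(E, B)}
variable (S : Type u) [Preorder S] [IsDirected S (· ≤ ·)]

/-- Spine-wise retraction of the disk hedgehog onto the arc hedgehog. -/
noncomputable def diskToArcHedgehog : C(DiskHedgehog S, ArcHedgehog S) :=
  Wedge.map diskToI diskToI_center

/-- Spine-wise section of the retraction. -/
noncomputable def arcToDiskHedgehog : C(ArcHedgehog S, DiskHedgehog S) :=
  Wedge.map iToDisk iToDisk_zero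

theorem diskToArc_arcToDisk (z : ArcHedgehog S) :
    diskToArcHedgehog S (arcToDiskHedgehog S z) = z := by
  induction z using Quot.ind with
  | _ x =>
    obtain ⟨s, t⟩ := x
    show Wedge.wmk 0 s (diskToI (iToDisk t)) = Wedge.wmk 0 s t
    rw [diskToI_iToDisk]

theorem arcLift_exists (hp : IsDiskHedgehogCovering.{u} p) (e : E)
    (F : C(ArcHedgehog S, B)) (z₀ : ArcHedgehog S) (h : F z₀ = p e) :
    ∃ G : C(ArcHedgehog S, E), p.comp G = F ∧ G z₀ = e := by
  obtain ⟨G', ⟨h1, h2⟩, -⟩ := hp S e (F.comp (diskToArcHedgehog S)) (arcToDiskHedgehog S z₀)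
    (by show F (diskToArcHedgehog S (arcToDiskHedgehog S z₀)) = p e
        rw [diskToArc_arcToDisk]; exact h)
  refine ⟨G'.comp (arcToDiskHedgehog S), ?_, h2⟩
  ext z
  have := ContinuousMap.congr_fun h1 (arcToDiskHedgehog S z)
  simp only [ContinuousMap.comp_apply] at this ⊢
  rw [this, diskToArc_arcToDisk]

end Aux6
section Aux7
open Set Filter

variable {E B : Type u} [TopologicalSpace E] [TopologicalSpace B] {p : C(E, B)}

theorem liftEnd_congr (hp : IsDiskHedgehogCovering.{u} p) {a b : B} {e e' : E}
    {α α' : Path a b} (h : a = p e) (h' : a = p e') (he : e = e') (hα : α = α') :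
    liftEnd hp e α h = liftEnd hp e' α' h' := by
  subst he; subst hα; rfl

/-- The directed set of pairs (path-connected open neighbourhood of `x`, natural number). -/
structure PCNbhd {X : Type v} [TopologicalSpace X] (x : X) : Type v where
  W : Set X
  n : ℕ
  isOpen : IsOpen W
  mem : x ∈ W
  pc : IsPathConnected W

instance {X : Type v} [TopologicalSpace X] {x : X} : Preorder (PCNbhd x) where
  le u v := v.W ⊆ u.W ∧ u.n ≤ v.n
  lt u v := (v.W ⊆ u.W ∧ u.n ≤ v.n) ∧ ¬(u.W ⊆ v.W ∧ v.n ≤ u.n)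
  le_refl u := ⟨subset_rfl, le_refl _⟩
  le_trans u v w h1 h2 := ⟨h2.1.trans h1.1, h1.2.trans h2.2⟩
  lt_iff_le_not_ge u v := Iff.rfl

instance {X : Type v} [TopologicalSpace X] [LocallyPathConnectedSpace X] {x : X} :
    IsDirected (PCNbhd x) (· ≤ ·) := ⟨by
  rintro ⟨W1, n1, h1o, h1x, h1pc⟩ ⟨W2, n2, h2o, h2x, h2pc⟩
  have hmem : W1 ∩ W2 ∈ 𝓝 x := Filter.inter_mem (h1o.mem_nhds h1x) (h2o.mem_nhds h2x)
  obtain ⟨V, ⟨hVo, hVx, hVpc⟩, hVsub⟩ := (isOpen_isPathConnected_basis x).mem_iff.mp hmem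
  exact ⟨⟨V, max n1 n2, hVo, hVx, hVpc⟩,
    ⟨hVsub.trans Set.inter_subset_left, le_max_left _ _⟩,
    ⟨hVsub.trans Set.inter_subset_right, le_max_right _ _⟩⟩⟩

end Aux7
/-- lifting criterion for disk-hedgehog coverings in terms of hedgehog
fundamental groups: a map `f : X → B` from a Peano space lifts iff the image of
`π(X, x₀)` in `π(B, b₀)` is contained in the image of `π(E, e₀)`. -/
theorem lifting_criterion {X E B : Type u} [TopologicalSpace X] [TopologicalSpace E]
    [TopologicalSpace B] [ConnectedSpace X] [LocallyPathConnectedSpace X]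
    [PathConnectedSpace E] [PathConnectedSpace B]
    (p : C(E, B)) (hp : IsDiskHedgehogCovering.{u} p)
    (f : C(X, B)) (x₀ : X) (e₀ : E) (hf : f x₀ = p e₀) :
    (∃ g : C(X, E), p.comp g = f ∧ g x₀ = e₀) ↔
      (∀ lam : C(I, X), lam 0 = x₀ → lam 1 = x₀ →
        ∃ μ : C(I, E), μ 0 = e₀ ∧ μ 1 = e₀ ∧
          HedgehogLoopEq (p e₀) (f.comp lam) (p.comp μ)) := by
  constructor
  · rintro ⟨g, hg, hgx₀⟩ lam hlam0 hlam1
    refine ⟨g.comp lam, ?_, ?_, ?_⟩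
    · show g (lam 0) = e₀
      rw [hlam0, hgx₀]
    · show g (lam 1) = e₀
      rw [hlam1, hgx₀]
    · intro E' _ _ _ q hq g' h' hg' hh' h0
      have hfl : ∀ t, (f.comp lam) t = (p.comp (g.comp lam)) t := fun t => by
        show f (lam t) = p (g (lam t))
        rw [← ContinuousMap.congr_fun hg (lam t)]
        rfl
      obtain ⟨G, -, hGu⟩ := pathlift hq (g' 0) (f.comp lam) (hg' 0).symm
      have e1 : g' = G := hGu g' ⟨hg', rfl⟩
      have e2 : h' = G := hGu h' ⟨fun t => by rw [hh' t]; exact (hfl t).symm, h0.symm⟩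
      rw [e1, e2]
  · intro hyp
    haveI : PathConnectedSpace X := pathConnectedSpace_iff_connectedSpace.mpr ‹_›
    haveI hPEpc : PathConnectedSpace (PE E) := PE.pathConnectedSpace
    set Λ : ∀ x : X, Path x₀ x := fun x => PathConnectedSpace.somePath x₀ x with hΛ
    set g₀ : X → E := fun x => liftEnd hp e₀ ((Λ x).map f.continuous) hf with hg₀def
    have hpg : ∀ x, p (g₀ x) = f x := fun x => p_liftEnd hp e₀ _ hf
    -- KEY: the lift endpoint does not depend on the chosen path
    have hKey : ∀ (x : X) (lam : Path x₀ x),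
        liftEnd hp e₀ (lam.map f.continuous) hf = g₀ x := by
      intro x lam
      set α := lam.map f.continuous with hα
      set β := (Λ x).map f.continuous with hβ
      set loop := lam.trans (Λ x).symm with hloop
      obtain ⟨μ, hμ0, hμ1, hHLE⟩ := hyp loop.toContinuousMap loop.source loop.target
      set L := liftPath hp e₀ (loop.map f.continuous) hf with hLdef
      have hL1 : L 1 = e₀ := by
        have hconc := hHLE (PE E) (pPE p) (pPE_covering hp)
          ⟨fun t => PE.ofE (L t), PE.continuous_ofE_comp L.continuous⟩
          ⟨fun t => PE.ofE (μ t), PE.continuous_ofE_comp μ.continuous⟩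
          (fun t => by
            show p (L t) = f (loop t)
            rw [p_liftPath]
            rfl)
          (fun t => rfl)
          (congrArg PE.ofE (by rw [liftPath_zero, hμ0]))
        have : L 1 = μ 1 := congrArg PE.toE hconc
        rw [this, hμ1]
      have hmap : loop.map f.continuous = α.trans β.symm := by
        rw [hloop, Path.map_trans, Path.map_symm]
      have hthis : liftEnd hp e₀ (α.trans β.symm) hf = e₀ := by
        rw [← hmap]
        exact hL1
      rw [liftEnd_trans] at hthis
      have h2 := liftEnd_symm hp (liftEnd hp e₀ α hf) β.symm (p_liftEnd hp e₀ α hf).symm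
      have h3 : g₀ x = liftEnd hp (liftEnd hp (liftEnd hp e₀ α hf) β.symm
          (p_liftEnd hp e₀ α hf).symm) β.symm.symm
          (p_liftEnd hp (liftEnd hp e₀ α hf) β.symm (p_liftEnd hp e₀ α hf).symm).symm :=
        liftEnd_congr hp hf _ hthis.symm β.symm_symm.symm
      rw [h3, h2]
    have hgx₀ : g₀ x₀ = e₀ := by
      have h1 := hKey x₀ (Path.refl x₀)
      have h2 : (ContinuousMap.const I e₀ : C(I, E)) =
          liftPath hp e₀ ((Path.refl x₀).map f.continuous) hf := by
        apply liftPath_unique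
        · intro t
          show p e₀ = f x₀
          exact hf.symm
        · rfl
      rw [← h1]
      show liftPath hp e₀ ((Path.refl x₀).map f.continuous) hf 1 = e₀
      rw [← h2]
      rfl
    have hcont : Continuous g₀ := by
      rw [continuous_iff_continuousAt]
      intro x
      rw [ContinuousAt, Filter.tendsto_def]
      intro N hN
      obtain ⟨U, hUsub, hUopen, hU⟩ := mem_nhds_iff.mp hN
      suffices hs : g₀ ⁻¹' U ∈ 𝓝 x from
        Filter.mem_of_superset hs (Set.preimage_mono hUsub)
      by_contra hcon
      have hbad : ∀ W : Set X, IsOpen W → x ∈ W → ∃ y, y ∈ W ∧ g₀ y ∉ U := by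
        intro W hWo hxW
        by_contra hno
        push_neg at hno
        exact hcon (Filter.mem_of_superset (hWo.mem_nhds hxW) (fun y hy => hno y hy))
      have hsel : ∀ W : PCNbhd x, ∃ (y : X) (c : Path x y), (∀ t, c t ∈ W.W) ∧ g₀ y ∉ U := by
        intro W
        obtain ⟨y, hyW, hyU⟩ := hbad W.W W.isOpen W.mem
        obtain ⟨c, hc⟩ := W.pc.joinedIn x W.mem y hyW
        exact ⟨y, c, hc, hyU⟩
      choose yy cc hccmem hyyU using hsel
      set F : C(ArcHedgehog (PCNbhd x), B) := Wedge.liftCM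
        (fun s => f.comp (cc s).toContinuousMap) (f x)
        (fun s => by show f ((cc s) 0) = f x; rw [Path.source])
        (by
          intro O hO hfx
          have hmem : f ⁻¹' O ∈ 𝓝 x :=
            f.continuous.continuousAt.preimage_mem_nhds (hO.mem_nhds hfx)
          obtain ⟨W₀, ⟨hW₀o, hW₀x, hW₀pc⟩, hW₀sub⟩ :=
            (isOpen_isPathConnected_basis x).mem_iff.mp hmem
          refine ⟨⟨W₀, 0, hW₀o, hW₀x, hW₀pc⟩, ?_⟩
          rintro s hlt a
          exact hW₀sub (hlt.le.1 (hccmem s a))) with hF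
      set s₀ : PCNbhd x := ⟨Set.univ, 0, isOpen_univ, Set.mem_univ x,
        pathConnectedSpace_iff_univ.mp inferInstance⟩ with hs₀
      set z₀ : ArcHedgehog (PCNbhd x) := Wedge.wmk 0 s₀ 0 with hz₀
      have hFz₀ : F z₀ = p (g₀ x) := by
        show f ((cc s₀) 0) = p (g₀ x)
        rw [Path.source, hpg x]
      obtain ⟨G, hG1, hG2⟩ := arcLift_exists (PCNbhd x) hp (g₀ x) F z₀ hFz₀
      -- the spine lifts compute `g₀` at the chosen bad points
      have hspine : ∀ s : PCNbhd x, G (Wedge.wmk 0 s 1) = g₀ (yy s) := by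
        intro s
        have hLs : G.comp (Wedge.incl 0 s) =
            liftPath hp (g₀ x) ((cc s).map f.continuous) (hpg x).symm := by
          apply liftPath_unique
          · intro t
            have := ContinuousMap.congr_fun hG1 (Wedge.wmk 0 s t)
            exact this
          · show G (Wedge.wmk 0 s 0) = g₀ x
            rw [Wedge.pt_eq s s₀]
            exact hG2
        have hend : G (Wedge.wmk 0 s 1) =
            liftEnd hp (g₀ x) ((cc s).map f.continuous) (hpg x).symm :=
          ContinuousMap.congr_fun hLs 1
        rw [hend]
        -- use KEY with the concatenated path
        have hk := hKey (yy s) ((Λ x).trans (cc s))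
        rw [Path.map_trans, liftEnd_trans] at hk
        rw [← hk]
      have hop : IsOpen (G ⁻¹' U) := hUopen.preimage G.continuous
      rcases Wedge.isOpen_iff.mp hop with ⟨-, hcof2⟩
      obtain ⟨t, ht⟩ := hcof2 ⟨s₀, by
        show G z₀ ∈ U
        rw [hG2]
        exact hU⟩
      set tbig : PCNbhd x := ⟨t.W, t.n + 1, t.isOpen, t.mem, t.pc⟩ with htbig
      have hlt : t < tbig := by
        refine lt_of_le_not_ge ⟨subset_rfl, Nat.le_succ _⟩ ?_
        intro hle
        exact Nat.not_succ_le_self t.n hle.2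
      have hmem1 := ht tbig hlt 1
      replace hmem1 : G (Wedge.wmk 0 tbig 1) ∈ U := hmem1
      rw [hspine tbig] at hmem1
      exact hyyU tbig hmem1
    exact ⟨⟨g₀, hcont⟩, by ext x; exact hpg x, hgx₀⟩
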